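/- The spectral norm of the Pauli transfer matrix block of an M-qubit reset operation within an N-qubit system equals 2^{M/2}: for E = Γ^{⊗M} ⊗ I^{⊗(N−M)} with Γ the single-qubit reset PTM, the lower-right (4^N−1)×(4^N−1) block E' satisfies σ_max(E') = 2^{M/2} when M < N. -/
import Mathlib


open Matrix BigOperators

/-- The 4×4 Pauli transfer matrix (in the basis I, X, Y, Z) of the
single-qubit complete reset (amplitude damping with γ = 1). -/
noncomputable def resetPTM1 : Matrix (Fin 4) (Fin 4) ℝ :=
  !![1, 0, 0, 0; 0, 0, 0, 0; 0, 0, 0, 0; 1, 0, 0, 0]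

/-- The PTM of the `M`-qubit reset within an `N`-qubit system: the Kronecker
product of `M` copies of `resetPTM1` (on the first `M` qubits) and `N − M`
copies of the 4×4 identity, realized as a matrix indexed by Pauli-string
labels `Fin N → Fin 4`. -/
noncomputable def resetPTM (N M : ℕ) : Matrix (Fin N → Fin 4) (Fin N → Fin 4) ℝ :=
  fun i j => ∏ q : Fin N,
    if (q : ℕ) < M then resetPTM1 (i q) (j q) else (if i q = j q then 1 else 0)

/-- The lower-right `(4^N − 1) × (4^N − 1)` block of `resetPTM N M`, obtained
by deleting the row and column of the identity Pauli string. -/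
noncomputable def resetPTMBlock (N M : ℕ) :
    Matrix {k : Fin N → Fin 4 // k ≠ 0} {k : Fin N → Fin 4 // k ≠ 0} ℝ :=
  fun i j => resetPTM N M i.1 j.1

/-! ### Auxiliary material -/

lemma resetPTM1_eq (a b : Fin 4) :
    resetPTM1 a b = if (b = 0 ∧ (a = 0 ∨ a = 3)) then 1 else 0 := by
  fin_cases a <;> fin_cases b <;>
    simp [resetPTM1, Matrix.vecHead, Matrix.vecTail]

/-- The condition at site `q` for the entry `resetPTM N M i j` to be `1`. -/
def resetCond (M : ℕ) {N : ℕ} (i j : Fin N → Fin 4) (q : Fin N) : Prop :=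
  if (q : ℕ) < M then (j q = 0 ∧ (i q = 0 ∨ i q = 3)) else i q = j q

instance (M : ℕ) {N : ℕ} (i j : Fin N → Fin 4) (q : Fin N) :
    Decidable (resetCond M i j q) := by
  unfold resetCond; infer_instance

lemma resetPTM_eq (N M : ℕ) (i j : Fin N → Fin 4) :
    resetPTM N M i j = if (∀ q, resetCond M i j q) then 1 else 0 := by
  rw [resetPTM]
  have : ∀ q : Fin N,
      (if (q : ℕ) < M then resetPTM1 (i q) (j q) else (if i q = j q then (1:ℝ) else 0)) =
        if resetCond M i j q then 1 else 0 := by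
    intro q
    unfold resetCond
    by_cases h : (q : ℕ) < M <;> simp [h, resetPTM1_eq]
  simp_rw [this]
  rw [Finset.prod_boole]
  simp

/-- The diagonal projection matrix onto the Pauli strings which vanish on the first
`M` qubits. -/
noncomputable def resetProj (N M : ℕ) :
    Matrix {k : Fin N → Fin 4 // k ≠ 0} {k : Fin N → Fin 4 // k ≠ 0} ℝ :=
  fun j j' => if j = j' ∧ (∀ q : Fin N, (q : ℕ) < M → j.1 q = 0) then 1 else 0

lemma resetProj_mul_self (N M : ℕ) :
    resetProj N M * resetProj N M = resetProj N M := by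
  ext j j'
  rw [Matrix.mul_apply]
  rw [Finset.sum_eq_single j]
  · unfold resetProj
    by_cases h1 : j = j'
    · subst h1
      by_cases h2 : ∀ q : Fin N, (q : ℕ) < M → j.1 q = 0
      · rw [if_pos ⟨rfl, h2⟩]; norm_num
      · rw [if_neg (fun h => h2 h.2)]; norm_num
    · simp [h1]
  · intro k _ hk
    have : j ≠ k := Ne.symm hk
    simp [resetProj, this]
  · simp

lemma resetProj_star (N M : ℕ) : star (resetProj N M) = resetProj N M := by
  ext j j'
  simp only [Matrix.star_eq_conjTranspose, Matrix.conjTranspose_apply, resetProj, star_trivial]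
  refine if_congr ?_ rfl rfl
  constructor
  · rintro ⟨rfl, h⟩; exact ⟨rfl, h⟩
  · rintro ⟨rfl, h⟩; exact ⟨rfl, h⟩

lemma resetProj_ne_zero (N M : ℕ) (hM : M < N) : resetProj N M ≠ 0 := by
  intro h
  set j0 : Fin N → Fin 4 := fun q => if (q : ℕ) = M then 1 else 0 with hj0
  have hj0M : j0 ⟨M, hM⟩ = 1 := by simp [hj0]
  have hne : j0 ≠ 0 := by
    intro h0
    have h1 := congrFun h0 ⟨M, hM⟩
    rw [hj0M] at h1
    rw [Pi.zero_apply] at h1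
    exact absurd h1 (by decide)
  have hz : ∀ q : Fin N, (q : ℕ) < M → j0 q = 0 := by
    intro q hq
    simp only [hj0]
    rw [if_neg (Nat.ne_of_lt hq)]
  have h2 := congrFun (congrFun h ⟨j0, hne⟩) ⟨j0, hne⟩
  simp only [resetProj, Matrix.zero_apply] at h2
  rw [if_pos ⟨trivial, hz⟩] at h2
  exact one_ne_zero h2

lemma card_filter_lt (N M : ℕ) (hM : M < N) :
    (Finset.univ.filter fun q : Fin N => (q : ℕ) < M).card = M := by
  have : (Finset.univ.filter fun q : Fin N => (q : ℕ) < M) = Finset.Iio (⟨M, hM⟩ : Fin N) := by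
    ext q
    simp [Fin.lt_def]
  rw [this, Fin.card_Iio]

/-- The key matrix identity: `Aᴴ A = 2^M • P`. -/
lemma resetPTMBlock_conjTranspose_mul (N M : ℕ) (hM : M < N) :
    (resetPTMBlock N M)ᴴ * resetPTMBlock N M = ((2 : ℝ) ^ M) • resetProj N M := by
  ext j j'
  simp only [Matrix.mul_apply, Matrix.conjTranspose_apply, Matrix.smul_apply, resetPTMBlock,
    star_trivial, smul_eq_mul, resetProj]
  by_cases hjj : j = j' ∧ (∀ q : Fin N, (q : ℕ) < M → j.1 q = 0)
  · obtain ⟨rfl, hz⟩ := hjj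
    rw [if_pos ⟨rfl, hz⟩, mul_one]
    -- both factors are equal; each term is an indicator
    have hterm : ∀ i : {k : Fin N → Fin 4 // k ≠ 0},
        resetPTM N M i.1 j.1 * resetPTM N M i.1 j.1 =
          if (∀ q, resetCond M i.1 j.1 q) then 1 else 0 := by
      intro i
      rw [resetPTM_eq]
      split_ifs <;> norm_num
    simp_rw [hterm]
    -- pass from the subtype sum to the full sum
    have hj0 : ∃ q0 : Fin N, ¬ ((q0 : ℕ) < M) ∧ j.1 q0 ≠ 0 := by
      by_contra hcon
      push_neg at hcon
      apply j.2
      funext q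
      by_cases hq : (q : ℕ) < M
      · exact hz q hq
      · exact hcon q (Nat.le_of_not_lt hq)
    obtain ⟨q0, hq0M, hq0⟩ := hj0
    have hsub : (∑ i : {k : Fin N → Fin 4 // k ≠ 0},
          if (∀ q, resetCond M i.1 j.1 q) then (1:ℝ) else 0) =
        ∑ i : Fin N → Fin 4, if (∀ q, resetCond M i j.1 q) then (1:ℝ) else 0 := by
      rw [← Finset.sum_subtype (Finset.univ.erase (0 : Fin N → Fin 4))
        (by intro x; simp) (fun i => if (∀ q, resetCond M i j.1 q) then (1:ℝ) else 0)]
      have hnall : ¬ (∀ q, resetCond M (0 : Fin N → Fin 4) j.1 q) := by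
        intro hall
        have h := hall q0
        rw [resetCond, if_neg hq0M] at h
        exact hq0 (by simpa using h.symm)
      rw [Finset.sum_erase _ (by rw [if_neg hnall])]
    rw [hsub]
    -- rewrite the indicator as a product over sites and swap sum and product
    have hswap : (∑ i : Fin N → Fin 4, if (∀ q, resetCond M i j.1 q) then (1:ℝ) else 0) =
        ∏ q : Fin N, ∑ a : Fin 4,
          (if (if (q : ℕ) < M then (j.1 q = 0 ∧ (a = 0 ∨ a = 3)) else a = j.1 q)
            then (1:ℝ) else 0) := by
      rw [Fintype.prod_sum]
      apply Finset.sum_congr rfl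
      intro i _
      by_cases hc : ∀ q, resetCond M i j.1 q
      · rw [if_pos hc]
        refine (Finset.prod_eq_one ?_).symm
        intro q _
        rw [if_pos]
        have hcq := hc q
        unfold resetCond at hcq
        exact hcq
      · rw [if_neg hc]
        obtain ⟨q, hq⟩ := not_forall.mp hc
        refine (Finset.prod_eq_zero (Finset.mem_univ q) ?_).symm
        rw [if_neg]
        intro h
        exact hq (by unfold resetCond; exact h)
    rw [hswap]
    have hinner : ∀ q : Fin N,
        (∑ a : Fin 4, (if (if (q : ℕ) < M then (j.1 q = 0 ∧ (a = 0 ∨ a = 3)) else a = j.1 q)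
            then (1:ℝ) else 0)) = if (q : ℕ) < M then 2 else 1 := by
      intro q
      by_cases hq : (q : ℕ) < M
      · simp only [hq, if_true, hz q hq, true_and]
        norm_num [Fin.sum_univ_four]
        rw [show (2:ℝ) = ((2:ℕ):ℝ) by norm_num]
        exact Nat.cast_inj.mpr (by decide)
      · simp [hq]
    simp_rw [hinner]
    rw [Finset.prod_ite, Finset.prod_const, Finset.prod_const, card_filter_lt N M hM]
    simp
  · rw [if_neg hjj, mul_zero]
    apply Finset.sum_eq_zero
    intro i _
    rw [resetPTM_eq, resetPTM_eq]
    by_cases h1 : (∀ q, resetCond M i.1 j.1 q)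
    · by_cases h2 : (∀ q, resetCond M i.1 j'.1 q)
      · exfalso
        apply hjj
        have hz : ∀ q : Fin N, (q : ℕ) < M → j.1 q = 0 := by
          intro q hq
          have := h1 q
          rw [resetCond, if_pos hq] at this
          exact this.1
        refine ⟨?_, hz⟩
        apply Subtype.ext
        funext q
        by_cases hq : (q : ℕ) < M
        · have h1q := h1 q; have h2q := h2 q
          rw [resetCond, if_pos hq] at h1q h2q
          rw [h1q.1, h2q.1]
        · have h1q := h1 q; have h2q := h2 q
          rw [resetCond, if_neg hq] at h1q h2q
          rw [← h1q, h2q]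
      · rw [if_neg h2, mul_zero]
    · rw [if_neg h1, zero_mul]

set_option synthInstance.maxHeartbeats 1000000
set_option maxHeartbeats 1000000

/-- For `M < N`, the spectral norm of the lower-right block
of the `M`-qubit reset PTM within an `N`-qubit system equals `2^{M/2}`. -/
theorem resetPTM_block_spectral_norm (N M : ℕ) (hM : M < N) :
    ‖(Matrix.toEuclideanCLM (𝕜 := ℝ) (resetPTMBlock N M) :
        EuclideanSpace ℝ {k : Fin N → Fin 4 // k ≠ 0} →L[ℝ]
          EuclideanSpace ℝ {k : Fin N → Fin 4 // k ≠ 0})‖ =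
      (2 : ℝ) ^ ((M : ℝ) / 2) := by
  set T := Matrix.toEuclideanCLM (𝕜 := ℝ) (resetPTMBlock N M) with hT
  set p := Matrix.toEuclideanCLM (𝕜 := ℝ) (resetProj N M) with hp
  have hp1 : p * p = p := by
    rw [hp, ← _root_.map_mul, resetProj_mul_self]
  have hpstar : star p = p := by
    rw [hp, ← StarHomClass.map_star, resetProj_star]
  have hp0 : p ≠ 0 := by
    intro h
    apply resetProj_ne_zero N M hM
    have h2 : resetProj N M = (Matrix.toEuclideanCLM (𝕜 := ℝ)).symm 0 := by
      rw [← h, hp, StarAlgEquiv.symm_apply_apply]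
    rwa [map_zero] at h2
  have hpnorm : ‖p‖ = 1 := by
    have h := CStarRing.norm_star_mul_self (x := p)
    rw [hpstar, hp1] at h
    have hne : ‖p‖ ≠ 0 := norm_ne_zero_iff.mpr hp0
    exact (mul_left_cancel₀ hne (by rw [mul_one]; exact h)).symm
  have hTT : star T * T = ((2 : ℝ) ^ M) • p := by
    rw [hT, hp, ← StarHomClass.map_star, ← _root_.map_mul, Matrix.star_eq_conjTranspose,
      resetPTMBlock_conjTranspose_mul N M hM, _root_.map_smul]
  have hsq : ‖T‖ * ‖T‖ = (2 : ℝ) ^ M := by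
    rw [← CStarRing.norm_star_mul_self (x := T), hTT, norm_smul ((2:ℝ)^M) p, hpnorm, mul_one]
    simp [abs_of_nonneg]
  have hr : ((2 : ℝ) ^ ((M : ℝ) / 2)) * ((2 : ℝ) ^ ((M : ℝ) / 2)) = (2 : ℝ) ^ M := by
    rw [← Real.rpow_add (by norm_num : (0:ℝ) < 2)]
    rw [show (M : ℝ) / 2 + (M : ℝ) / 2 = (M : ℝ) by ring]
    exact Real.rpow_natCast 2 M
  have h1 : ‖T‖ = Real.sqrt (‖T‖ * ‖T‖) := (Real.sqrt_mul_self (norm_nonneg T)).symm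
  rw [h1, hsq, ← hr, Real.sqrt_mul_self (Real.rpow_nonneg (by norm_num) _)]
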